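/- Let γ, λ ∈ (0,1) with γλ < 1, b_eps ∈ (γ,1], ε > 0, and n ≥ 1. Suppose for all i ≤ n−1 that |Δρ_i| ≤ (6ε/π²) · (b_eps/γ)^{n−i−1} / (γ F_i i²) holds with F_i ≥ 0 and ρ_j ∈ [0,1/b_eps]. Then the follow-on trace difference satisfies |ΔF_n| ≤ Σ_{i=1}^{n−1} (γ/b_eps)^{n−i−1} γ |Δρ_i| F_i ≤ ε, and consequently the emphasis difference |ΔM_n| = (1−λ)|ΔF_n| ≤ ε. -/

import Mathlib

private lemma follow_on_aux
    (γ b_eps : ℝ) (hγ : 0 < γ) (hbγ : γ < b_eps) (hb1 : b_eps ≤ 1)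
    (ρ ρhat F Fhat : ℕ → ℝ)
    (hρhat : ∀ j, 0 ≤ ρhat j ∧ ρhat j ≤ 1 / b_eps)
    (hFnonneg : ∀ i, 0 ≤ F i)
    (hF0 : F 0 = 1) (hFhat0 : Fhat 0 = 1)
    (hFrec : ∀ j, 1 ≤ j → F j = 1 + γ * ρ (j - 1) * F (j - 1))
    (hFhatrec : ∀ j, 1 ≤ j → Fhat j = 1 + γ * ρhat (j - 1) * Fhat (j - 1))
    (hρ0 : ρhat 0 = ρ 0) :
    ∀ m, |Fhat m - F m| ≤
      ∑ i ∈ Finset.Icc 1 (m - 1),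
        (γ / b_eps) ^ (m - i - 1) * γ * |ρhat i - ρ i| * F i := by
  have hbpos : 0 < b_eps := lt_trans hγ hbγ
  intro m
  induction m with
  | zero => simp [hF0, hFhat0]
  | succ m ih =>
    have hdiff : Fhat (m + 1) - F (m + 1)
        = γ * ρhat m * (Fhat m - F m) + γ * (ρhat m - ρ m) * F m := by
      rw [hFhatrec (m + 1) (by omega), hFrec (m + 1) (by omega)]
      simp only [Nat.add_sub_cancel]
      ring
    have hkey : |Fhat (m + 1) - F (m + 1)|
        ≤ (γ / b_eps) * |Fhat m - F m| + γ * |ρhat m - ρ m| * F m := by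
      rw [hdiff]
      refine le_trans (abs_add_le _ _) (add_le_add ?_ ?_)
      · rw [abs_mul]
        have h1 : |γ * ρhat m| ≤ γ / b_eps := by
          rw [abs_of_nonneg (mul_nonneg hγ.le (hρhat m).1)]
          calc γ * ρhat m ≤ γ * (1 / b_eps) :=
                mul_le_mul_of_nonneg_left (hρhat m).2 hγ.le
            _ = γ / b_eps := by ring
        exact mul_le_mul_of_nonneg_right h1 (abs_nonneg _)
      · rw [abs_mul, abs_mul, abs_of_nonneg hγ.le, abs_of_nonneg (hFnonneg m)]
    rcases Nat.eq_zero_or_pos m with hm0 | hm1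
    · subst hm0
      simp only [hF0, hFhat0, sub_self, abs_zero, mul_zero, zero_add] at hkey
      rw [hρ0] at hkey
      simpa using hkey
    · have hstep : |Fhat (m+1) - F (m+1)| ≤
          (γ / b_eps) * (∑ i ∈ Finset.Icc 1 (m - 1),
            (γ / b_eps) ^ (m - i - 1) * γ * |ρhat i - ρ i| * F i)
          + γ * |ρhat m - ρ m| * F m := by
        refine le_trans hkey (add_le_add ?_ le_rfl)
        exact mul_le_mul_of_nonneg_left ih (div_nonneg hγ.le hbpos.le)
      refine le_trans hstep (le_of_eq ?_)
      have hm : m - 1 + 1 = m := Nat.succ_pred_eq_of_pos hm1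
      have hsplit : ∑ i ∈ Finset.Icc 1 (m + 1 - 1),
          (γ / b_eps) ^ (m + 1 - i - 1) * γ * |ρhat i - ρ i| * F i
          = (∑ i ∈ Finset.Icc 1 (m - 1),
              (γ / b_eps) ^ (m + 1 - i - 1) * γ * |ρhat i - ρ i| * F i)
            + (γ / b_eps) ^ (m + 1 - m - 1) * γ * |ρhat m - ρ m| * F m := by
        rw [Nat.add_sub_cancel, ← hm, Finset.sum_Icc_succ_top (by omega)]
        rw [hm]
      rw [hsplit]
      have hterm : (m + 1 - m - 1 : ℕ) = 0 := by omega
      rw [hterm, pow_zero, one_mul, Finset.mul_sum]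
      congr 1
      refine Finset.sum_congr rfl fun i hi => ?_
      have hi' : i ≤ m - 1 := (Finset.mem_Icc.mp hi).2
      have he : (m + 1 - i - 1 : ℕ) = (m - i - 1) + 1 := by omega
      rw [he, pow_succ]
      ring

theorem emphasis_difference_eps_bound
    (γ lam b_eps ε : ℝ) (n : ℕ)
    (hγ : 0 < γ ∧ γ < 1) (hlam : 0 < lam ∧ lam < 1) (hγlam : γ * lam < 1)
    (hb : γ < b_eps ∧ b_eps ≤ 1) (hε : 0 < ε) (hn : 1 ≤ n)
    (ρ ρhat F Fhat : ℕ → ℝ)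
    (hρ : ∀ j, 0 ≤ ρ j ∧ ρ j ≤ 1 / b_eps)
    (hρhat : ∀ j, 0 ≤ ρhat j ∧ ρhat j ≤ 1 / b_eps)
    (hFnonneg : ∀ i, 0 ≤ F i)
    (hF0 : F 0 = 1) (hFhat0 : Fhat 0 = 1)
    (hFrec : ∀ j, 1 ≤ j → F j = 1 + γ * ρ (j - 1) * F (j - 1))
    (hFhatrec : ∀ j, 1 ≤ j → Fhat j = 1 + γ * ρhat (j - 1) * Fhat (j - 1))
    (hΔρ : ∀ i ≤ n - 1,
      |ρhat i - ρ i| ≤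
        (6 * ε / Real.pi ^ 2) * (b_eps / γ) ^ (n - i - 1) / (γ * F i * (i : ℝ) ^ 2)) :
    |Fhat n - F n| ≤
        (∑ i ∈ Finset.Icc 1 (n - 1),
          (γ / b_eps) ^ (n - i - 1) * γ * |ρhat i - ρ i| * F i) ∧
    (∑ i ∈ Finset.Icc 1 (n - 1),
        (γ / b_eps) ^ (n - i - 1) * γ * |ρhat i - ρ i| * F i) ≤ ε ∧
    |(1 - lam) * (Fhat n - F n)| ≤ ε := by
  obtain ⟨hγ0, hγ1⟩ := hγ
  obtain ⟨hbγ, hb1⟩ := hb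
  have hbpos : 0 < b_eps := lt_trans hγ0 hbγ
  -- Δρ at 0 is 0, since the bound has 0² in the denominator
  have hρ0 : ρhat 0 = ρ 0 := by
    have h := hΔρ 0 (Nat.zero_le _)
    simp at h
    linarith
  have h1 := follow_on_aux γ b_eps hγ0 hbγ hb1 ρ ρhat F Fhat hρhat hFnonneg
    hF0 hFhat0 hFrec hFhatrec hρ0 n
  -- F i ≥ 1 for i ≥ 1
  have hF1 : ∀ i, 1 ≤ i → (1 : ℝ) ≤ F i := by
    intro i hi
    rw [hFrec i hi]
    nlinarith [mul_nonneg (mul_nonneg hγ0.le (hρ (i-1)).1) (hFnonneg (i-1))]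
  -- termwise bound
  have hterm : ∀ i ∈ Finset.Icc 1 (n - 1),
      (γ / b_eps) ^ (n - i - 1) * γ * |ρhat i - ρ i| * F i
        ≤ (6 * ε / Real.pi ^ 2) * (1 / (i : ℝ) ^ 2) := by
    intro i hi
    obtain ⟨hi1, hi2⟩ := Finset.mem_Icc.mp hi
    have hFi : (1 : ℝ) ≤ F i := hF1 i hi1
    have hFipos : 0 < F i := lt_of_lt_of_le one_pos hFi
    have hipos : (0 : ℝ) < (i : ℝ) ^ 2 := by positivity
    have hbd := hΔρ i hi2
    have hpow : (0 : ℝ) < (γ / b_eps) ^ (n - i - 1) := by positivity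
    calc (γ / b_eps) ^ (n - i - 1) * γ * |ρhat i - ρ i| * F i
        ≤ (γ / b_eps) ^ (n - i - 1) * γ *
            ((6 * ε / Real.pi ^ 2) * (b_eps / γ) ^ (n - i - 1) / (γ * F i * (i:ℝ) ^ 2)) * F i := by
          gcongr
      _ = (6 * ε / Real.pi ^ 2) * (1 / (i : ℝ) ^ 2) *
            ((γ / b_eps) ^ (n - i - 1) * (b_eps / γ) ^ (n - i - 1)) := by
          field_simp
      _ = (6 * ε / Real.pi ^ 2) * (1 / (i : ℝ) ^ 2) := by
          rw [← mul_pow]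
          have : γ / b_eps * (b_eps / γ) = 1 := by field_simp
          rw [this, one_pow, mul_one]
  have hpi2 : (0 : ℝ) < Real.pi ^ 2 := by positivity
  -- sum bound
  have hsum : (∑ i ∈ Finset.Icc 1 (n - 1),
      (γ / b_eps) ^ (n - i - 1) * γ * |ρhat i - ρ i| * F i) ≤ ε := by
    refine le_trans (Finset.sum_le_sum hterm) ?_
    have hbasel : (∑ i ∈ Finset.Icc 1 (n - 1), (1 : ℝ) / (i : ℝ) ^ 2)
        ≤ Real.pi ^ 2 / 6 := by
      refine sum_le_hasSum _ (fun i _ => by positivity) hasSum_zeta_two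
    calc (∑ i ∈ Finset.Icc 1 (n - 1), (6 * ε / Real.pi ^ 2) * (1 / (i : ℝ) ^ 2))
        = (6 * ε / Real.pi ^ 2) * ∑ i ∈ Finset.Icc 1 (n - 1), (1 : ℝ) / (i : ℝ) ^ 2 := by
          rw [Finset.mul_sum]
      _ ≤ (6 * ε / Real.pi ^ 2) * (Real.pi ^ 2 / 6) := by
          refine mul_le_mul_of_nonneg_left hbasel (by positivity)
      _ = ε := by field_simp
  refine ⟨h1, hsum, ?_⟩
  have hF : |Fhat n - F n| ≤ ε := le_trans h1 hsum
  rw [abs_mul]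
  calc |1 - lam| * |Fhat n - F n| ≤ 1 * |Fhat n - F n| := by
        refine mul_le_mul_of_nonneg_right ?_ (abs_nonneg _)
        rw [abs_of_nonneg (by linarith [hlam.2])]
        linarith [hlam.1]
    _ = |Fhat n - F n| := one_mul _
    _ ≤ ε := hF
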